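/- There exists a real number γ₁ (the first Stieltjes constant) equal to the limit as N → ∞ of Σ_{n=1}^N (log n)/n − (log N)²/2, such that as s → 0 (s ∈ ℂ, s ≠ 0), the function ( ζ′(1+s)/ζ(1+s) + 1/s − γ ) / s tends to −γ² − 2γ₁, where ζ is the Riemann zeta function and γ is the Euler–Mascheroni constant. -/

import Mathlib

open Filter Topology

section ZetaExpansionAux
open Real intervalIntegral

noncomputable section
namespace ZetaExp

/-- the local error term -/
def zterm (n : ℕ) (s : ℝ) : ℝ :=
  ∫ x in (n : ℝ)..((n : ℝ) + 1), (Real.log n / (n : ℝ) ^ s - Real.log x / x ^ s)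

/-- the dominating bound -/
def zbound (n : ℕ) : ℝ := (1 + 2 * Real.log (n + 1)) / (n : ℝ) ^ 2

lemma hasDerivAt_logdiv {s t : ℝ} (ht : 0 < t) :
    HasDerivAt (fun x : ℝ => Real.log x / x ^ s)
      ((1 - s * Real.log t) / t ^ (s + 1)) t := by
  have h1 : HasDerivAt Real.log t⁻¹ t := Real.hasDerivAt_log ht.ne'
  have h2 : HasDerivAt (fun x : ℝ => x ^ s) (s * t ^ (s - 1)) t :=
    Real.hasDerivAt_rpow_const (Or.inl ht.ne')
  have h3 := h1.div h2 (by positivity)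
  refine h3.congr_deriv ?_
  have hts : (t : ℝ) ^ s ≠ 0 := by positivity
  rw [Real.rpow_add ht, Real.rpow_one, Real.rpow_sub ht, Real.rpow_one]
  field_simp

lemma deriv_bound {s t : ℝ} (hs : s ∈ Set.Icc 1 2) {n : ℕ} (hn : 1 ≤ n)
    (ht : t ∈ Set.Icc (n : ℝ) ((n : ℝ) + 1)) :
    |(1 - s * Real.log t) / t ^ (s + 1)| ≤ zbound n := by
  have hn1 : (1 : ℝ) ≤ (n : ℝ) := by exact_mod_cast hn
  have ht1 : (1 : ℝ) ≤ t := le_trans hn1 ht.1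
  have ht0 : (0 : ℝ) < t := lt_of_lt_of_le one_pos ht1
  have hlog : 0 ≤ Real.log t := Real.log_nonneg ht1
  have hnum : |1 - s * Real.log t| ≤ 1 + 2 * Real.log (n + 1) := by
    have h1 : Real.log t ≤ Real.log (n + 1) := Real.log_le_log ht0 ht.2
    have hl1 : 0 ≤ Real.log (n+1) := Real.log_nonneg (by linarith)
    rw [abs_le]
    constructor <;> nlinarith [hs.1, hs.2]
  have hden : (n : ℝ) ^ 2 ≤ t ^ (s + 1) := by
    calc (n:ℝ) ^ 2 ≤ t ^ 2 := by nlinarith [ht.1]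
    _ = t ^ (2:ℝ) := by rw [← Real.rpow_natCast t 2]; norm_num
    _ ≤ t ^ (s+1) := Real.rpow_le_rpow_of_exponent_le ht1 (by linarith [hs.1])
  have hden0 : (0:ℝ) < (n:ℝ)^2 := by positivity
  rw [abs_div, abs_of_nonneg (le_of_lt (Real.rpow_pos_of_pos ht0 _))]
  have hl1 : 0 ≤ Real.log ((n:ℝ)+1) := Real.log_nonneg (by linarith)
  exact div_le_div₀ (by linarith) hnum hden0 hden

end ZetaExp

namespace ZetaExp

lemma zbound_nonneg (n : ℕ) : 0 ≤ zbound n := by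
  have : 0 ≤ Real.log ((n:ℝ)+1) := Real.log_nonneg (by linarith [Nat.cast_nonneg (α := ℝ) n])
  unfold zbound; positivity

lemma integrand_bound {s : ℝ} (hs : s ∈ Set.Icc 1 2) {n : ℕ} (hn : 1 ≤ n)
    {x : ℝ} (hx : x ∈ Set.Icc (n : ℝ) ((n : ℝ) + 1)) :
    |Real.log n / (n : ℝ) ^ s - Real.log x / x ^ s| ≤ zbound n := by
  have hmem : (n : ℝ) ∈ Set.Icc (n : ℝ) ((n : ℝ) + 1) := by
    constructor <;> norm_num
  have key := Convex.norm_image_sub_le_of_norm_hasDerivWithin_le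
    (f := fun x : ℝ => Real.log x / x ^ s)
    (f' := fun t => (1 - s * Real.log t) / t ^ (s + 1))
    (C := zbound n) (s := Set.Icc (n : ℝ) ((n : ℝ) + 1))
    (fun t ht => (hasDerivAt_logdiv (by
      have : (1:ℝ) ≤ (n:ℝ) := by exact_mod_cast hn
      linarith [ht.1])).hasDerivWithinAt)
    (fun t ht => by rw [Real.norm_eq_abs]; exact deriv_bound hs hn ht)
    (convex_Icc _ _) hx hmem
  have hd : ‖(n:ℝ) - x‖ ≤ 1 := by
    rw [Real.norm_eq_abs, abs_sub_comm, abs_le]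
    constructor <;> linarith [hx.1, hx.2]
  calc |Real.log n / (n : ℝ) ^ s - Real.log x / x ^ s|
      = ‖(fun x : ℝ => Real.log x / x ^ s) (n:ℝ) - (fun x : ℝ => Real.log x / x ^ s) x‖ := by
        simp [Real.norm_eq_abs, abs_sub_comm]
    _ ≤ zbound n * ‖(n:ℝ) - x‖ := key
    _ ≤ zbound n * 1 := by
        exact mul_le_mul_of_nonneg_left hd (zbound_nonneg n)
    _ = zbound n := mul_one _

lemma zterm_bound {s : ℝ} (hs : s ∈ Set.Icc 1 2) {n : ℕ} (hn : 1 ≤ n) :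
    |zterm n s| ≤ zbound n := by
  have := intervalIntegral.norm_integral_le_of_norm_le_const
    (C := zbound n) (a := (n:ℝ)) (b := (n:ℝ)+1)
    (f := fun x => Real.log n / (n : ℝ) ^ s - Real.log x / x ^ s) ?_
  · simpa [zterm, Real.norm_eq_abs] using this
  · intro x hx
    rw [Set.uIoc_of_le (by linarith)] at hx
    exact (by simpa [Real.norm_eq_abs] using
      integrand_bound hs hn ⟨le_of_lt hx.1, hx.2⟩)

end ZetaExp

namespace ZetaExp

lemma log_le_two_sqrt {y : ℝ} (hy : 1 ≤ y) : Real.log y ≤ 2 * Real.sqrt y - 2 := by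
  have h0 : (0:ℝ) < y := by linarith
  have h := Real.log_le_sub_one_of_pos (Real.sqrt_pos.2 h0)
  rw [Real.log_sqrt h0.le] at h
  linarith

lemma summable_zbound : Summable (fun n : ℕ => zbound (n + 1)) := by
  have h32 : Summable (fun n : ℕ => ((n:ℝ) ^ ((3:ℝ)/2))⁻¹) :=
    Real.summable_nat_rpow_inv.2 (by norm_num)
  have h32' : Summable (fun n : ℕ => ((((n:ℕ)+1 : ℕ):ℝ) ^ ((3:ℝ)/2))⁻¹) :=
    (summable_nat_add_iff 1).2 h32
  have h32'' : Summable (fun n : ℕ => 9 * ((((n:ℝ)+1)) ^ ((3:ℝ)/2))⁻¹) := by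
    refine Summable.mul_left 9 (h32'.congr fun n => ?_)
    push_cast; ring_nf
  refine Summable.of_nonneg_of_le (fun n => zbound_nonneg _) (fun n => ?_) h32''
  set x : ℝ := (n:ℝ) + 1 with hx
  have hx1 : (1:ℝ) ≤ x := by simp [hx]
  have hx0 : (0:ℝ) < x := by linarith
  have hsq : (1:ℝ) ≤ Real.sqrt x := by
    rw [show (1:ℝ) = Real.sqrt 1 from (Real.sqrt_one).symm]
    exact Real.sqrt_le_sqrt hx1
  have hlog : Real.log (x + 1) ≤ 2 * Real.sqrt (x+1) - 2 := log_le_two_sqrt (by linarith)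
  have hsq2 : Real.sqrt (x+1) ≤ Real.sqrt 2 * Real.sqrt x := by
    rw [← Real.sqrt_mul (by norm_num)]
    exact Real.sqrt_le_sqrt (by linarith)
  have hs2 : Real.sqrt 2 ≤ (3:ℝ)/2 := by
    nlinarith [Real.sq_sqrt (by norm_num : (0:ℝ) ≤ 2), Real.sqrt_nonneg 2]
  have hnum : 1 + 2 * Real.log (x + 1) ≤ 9 * Real.sqrt x := by
    have hsx : 0 ≤ Real.sqrt x := by linarith
    nlinarith [Real.sqrt_nonneg (x+1)]
  have hrpow : (x ^ ((3:ℝ)/2))⁻¹ = Real.sqrt x / x ^ 2 := by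
    have h2 : (x:ℝ) ^ (2:ℕ) = x ^ ((2:ℝ)) := by
      rw [← Real.rpow_natCast x 2]; norm_num
    rw [Real.sqrt_eq_rpow, h2, eq_div_iff (by positivity), ← Real.rpow_neg hx0.le,
      ← Real.rpow_add hx0]
    norm_num
  have hzb : zbound (n+1) = (1 + 2 * Real.log (x + 1)) / x ^ 2 := by
    simp only [zbound, hx]
    push_cast
    ring_nf
  rw [hzb, hrpow]
  rw [div_le_iff₀ (by positivity)]
  have hxx : 9 * (Real.sqrt x / x ^ 2) * x ^ 2 = 9 * Real.sqrt x := by field_simp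
  rw [hxx]; exact hnum

end ZetaExp

namespace ZetaExp

lemma continuousOn_logdiv {s a b : ℝ} (ha : 0 < a) (hb : 0 < b) :
    ContinuousOn (fun x : ℝ => Real.log x / x ^ s) (Set.uIcc a b) := by
  have hpos : ∀ x ∈ Set.uIcc a b, 0 < x := fun x hx =>
    lt_of_lt_of_le (lt_min ha hb) hx.1
  intro x hx
  have hx0 : 0 < x := hpos x hx
  refine ContinuousWithinAt.div ?_ ?_ (by positivity)
  · exact (Real.continuousAt_log hx0.ne').continuousWithinAt
  · exact (Real.continuousAt_rpow_const x s (Or.inl hx0.ne')).continuousWithinAt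

lemma intervalIntegrable_logdiv {s a b : ℝ} (ha : 0 < a) (hb : 0 < b) :
    IntervalIntegrable (fun x : ℝ => Real.log x / x ^ s) MeasureTheory.volume a b :=
  (continuousOn_logdiv ha hb).intervalIntegrable

lemma zterm_eq (n : ℕ) (hn : 1 ≤ n) (s : ℝ) :
    zterm n s = Real.log n / (n:ℝ) ^ s - ∫ x in (n:ℝ)..((n:ℝ)+1), Real.log x / x ^ s := by
  have h0 : (0:ℝ) < (n:ℝ) := by exact_mod_cast hn
  rw [zterm, intervalIntegral.integral_sub intervalIntegrable_const
    (intervalIntegrable_logdiv h0 (by linarith)), intervalIntegral.integral_const]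
  simp

lemma sum_zterm_eq (N : ℕ) (s : ℝ) :
    ∑ k ∈ Finset.range N, zterm (k+1) s =
      (∑ k ∈ Finset.range N, Real.log (k+1) / ((k:ℝ)+1) ^ s)
        - ∫ x in (1:ℝ)..((N:ℝ)+1), Real.log x / x ^ s := by
  have key : ∑ k ∈ Finset.range N,
      ∫ x in (((k:ℝ)+1))..(((k:ℝ)+1)+1), Real.log x / x ^ s
      = ∫ x in (1:ℝ)..((N:ℝ)+1), Real.log x / x ^ s := by
    have := intervalIntegral.sum_integral_adjacent_intervals
      (a := fun k : ℕ => (k:ℝ)+1) (f := fun x => Real.log x / x ^ s)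
      (μ := MeasureTheory.volume) (n := N)
      (fun k _ => intervalIntegrable_logdiv (by positivity) (by positivity))
    simpa using this
  rw [← key, ← Finset.sum_sub_distrib]
  refine Finset.sum_congr rfl fun k _ => ?_
  have := zterm_eq (k+1) (by omega) s
  rw [this]
  push_cast
  rfl

end ZetaExp

namespace ZetaExp

lemma hasDerivAt_P {s x : ℝ} (hx : 0 < x) (hs : (1:ℝ) - s ≠ 0) :
    HasDerivAt (fun y : ℝ => y ^ (1-s) * ((1-s) * Real.log y - 1) / (1-s)^2)
      (Real.log x / x ^ s) x := by
  have h1 : HasDerivAt (fun y : ℝ => y ^ (1-s)) ((1-s) * x ^ (1-s-1)) x :=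
    Real.hasDerivAt_rpow_const (Or.inl hx.ne')
  have h2 : HasDerivAt (fun y : ℝ => (1-s) * Real.log y - 1) ((1-s) * x⁻¹) x :=
    ((Real.hasDerivAt_log hx.ne').const_mul (1-s)).sub_const 1
  have h3 := (h1.mul h2).div_const ((1-s)^2)
  refine h3.congr_deriv ?_
  have hxs : x ^ s ≠ 0 := (Real.rpow_pos_of_pos hx s).ne'
  rw [show (1:ℝ)-s-1 = -s by ring, Real.rpow_neg hx.le, Real.rpow_sub hx, Real.rpow_one]
  field_simp
  ring

lemma integral_logdiv_one {Y : ℝ} (hY : 1 ≤ Y) :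
    ∫ x in (1:ℝ)..Y, Real.log x / x ^ (1:ℝ) = Real.log Y ^ 2 / 2 := by
  have key : ∀ x ∈ Set.uIcc (1:ℝ) Y,
      HasDerivAt (fun y : ℝ => Real.log y ^ 2 / 2) (Real.log x / x ^ (1:ℝ)) x := by
    intro x hx
    rw [Set.uIcc_of_le hY] at hx
    have hx0 : (0:ℝ) < x := lt_of_lt_of_le one_pos hx.1
    have := ((Real.hasDerivAt_log hx0.ne').pow 2).div_const 2
    refine this.congr_deriv ?_
    rw [Real.rpow_one]
    field_simp
    ring
  have := intervalIntegral.integral_eq_sub_of_hasDerivAt key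
    (intervalIntegrable_logdiv one_pos (by linarith))
  rw [this]
  simp

lemma integral_logdiv_of_lt {s Y : ℝ} (hs : 1 < s) (hY : 1 ≤ Y) :
    ∫ x in (1:ℝ)..Y, Real.log x / x ^ s
      = Y ^ (1-s) * ((1-s) * Real.log Y - 1) / (1-s)^2 + 1 / (s-1)^2 := by
  have hs1 : (1:ℝ) - s ≠ 0 := by linarith
  have key : ∀ x ∈ Set.uIcc (1:ℝ) Y,
      HasDerivAt (fun y : ℝ => y ^ (1-s) * ((1-s) * Real.log y - 1) / (1-s)^2)
        (Real.log x / x ^ s) x := by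
    intro x hx
    rw [Set.uIcc_of_le hY] at hx
    exact hasDerivAt_P (lt_of_lt_of_le one_pos hx.1) hs1
  have := intervalIntegral.integral_eq_sub_of_hasDerivAt key
    (intervalIntegrable_logdiv one_pos (by linarith))
  rw [this, Real.one_rpow]
  have h12 : ((1:ℝ)-s)^2 = (s-1)^2 := by ring
  rw [Real.log_one]
  rw [h12]
  ring

end ZetaExp

namespace ZetaExp

lemma tendsto_P_zero {s : ℝ} (hs : 1 < s) :
    Tendsto (fun Y : ℝ => Y ^ (1-s) * ((1-s) * Real.log Y - 1) / (1-s)^2) atTop (𝓝 0) := by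
  have h1 : Tendsto (fun Y : ℝ => Y ^ (1-s)) atTop (𝓝 0) := by
    have := tendsto_rpow_neg_atTop (y := s - 1) (by linarith)
    simpa [show -(s-1) = 1-s by ring] using this
  have h2 : Tendsto (fun Y : ℝ => Y ^ (1-s) * Real.log Y) atTop (𝓝 0) := by
    have ho := (isLittleO_log_rpow_atTop (by linarith : (0:ℝ) < s - 1)).tendsto_div_nhds_zero
    refine ho.congr' ?_
    filter_upwards [eventually_gt_atTop (0:ℝ)] with Y hY
    rw [show (1:ℝ)-s = -(s-1) by ring, Real.rpow_neg hY.le]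
    rw [div_eq_mul_inv, mul_comm]
  have : Tendsto (fun Y : ℝ => ((1-s) * (Y ^ (1-s) * Real.log Y) - Y ^ (1-s)) / (1-s)^2)
      atTop (𝓝 (((1-s) * 0 - 0) / (1-s)^2)) :=
    ((h2.const_mul (1-s)).sub h1).div_const _
  simp only [mul_zero, sub_zero, zero_div] at this
  refine this.congr fun Y => ?_
  ring

lemma tendsto_integral_logdiv {s : ℝ} (hs : 1 < s) :
    Tendsto (fun N : ℕ => ∫ x in (1:ℝ)..((N:ℝ)+1), Real.log x / x ^ s)
      atTop (𝓝 (1 / (s-1)^2)) := by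
  have hN : Tendsto (fun N : ℕ => (N:ℝ)+1) atTop atTop :=
    tendsto_atTop_add_const_right _ 1 tendsto_natCast_atTop_atTop
  have := (tendsto_P_zero hs).comp hN
  have h2 : Tendsto (fun N : ℕ =>
      ((N:ℝ)+1) ^ (1-s) * ((1-s) * Real.log ((N:ℝ)+1) - 1) / (1-s)^2 + 1/(s-1)^2)
      atTop (𝓝 (0 + 1/(s-1)^2)) := this.add_const _
  rw [zero_add] at h2
  refine h2.congr fun N => ?_
  rw [integral_logdiv_of_lt hs (le_add_of_nonneg_left (Nat.cast_nonneg N))]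

lemma summable_zterm {s : ℝ} (hs : s ∈ Set.Icc 1 2) :
    Summable (fun n : ℕ => zterm (n+1) s) := by
  refine Summable.of_norm_bounded summable_zbound fun n => ?_
  rw [Real.norm_eq_abs]
  exact zterm_bound hs (by omega)

lemma partial_P_nonpos {s : ℝ} (hs : 1 < s) {Y : ℝ} (hY : 1 ≤ Y) :
    Y ^ (1-s) * ((1-s) * Real.log Y - 1) / (1-s)^2 ≤ 0 := by
  have h1 : (0:ℝ) < Y ^ (1-s) := Real.rpow_pos_of_pos (by linarith) _
  have h2 : (1-s) * Real.log Y - 1 ≤ 0 := by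
    have := Real.log_nonneg hY
    nlinarith
  have h3 : (0:ℝ) < (1-s)^2 := by nlinarith
  apply div_nonpos_of_nonpos_of_nonneg _ h3.le
  exact mul_nonpos_of_nonneg_of_nonpos h1.le h2

lemma summable_logdiv {s : ℝ} (hs : s ∈ Set.Ioc 1 2) :
    Summable (fun n : ℕ => Real.log (n+1) / ((n:ℝ)+1) ^ s) := by
  refine summable_of_sum_range_le (c := (∑' n, zbound (n+1)) + 1/(s-1)^2)
    (fun n => div_nonneg (Real.log_nonneg (by exact_mod_cast Nat.one_le_iff_ne_zero.2 (Nat.succ_ne_zero n) |>.trans (by push_cast; linarith))) (Real.rpow_nonneg (by positivity) _)) (fun N => ?_)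
  have key := sum_zterm_eq N s
  have h1 : ∑ k ∈ Finset.range N, Real.log (k+1) / ((k:ℝ)+1) ^ s
      = ∑ k ∈ Finset.range N, zterm (k+1) s + ∫ x in (1:ℝ)..((N:ℝ)+1), Real.log x / x ^ s := by
    rw [key]; ring
  rw [h1]
  gcongr
  · calc ∑ k ∈ Finset.range N, zterm (k+1) s
        ≤ ∑ k ∈ Finset.range N, zbound (k+1) := by
          refine Finset.sum_le_sum fun k _ => ?_
          exact (le_abs_self _).trans (zterm_bound ⟨hs.1.le, hs.2⟩ (by omega))
      _ ≤ ∑' n, zbound (n+1) :=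
          Summable.sum_le_tsum _ (fun k _ => zbound_nonneg _) summable_zbound
  · rw [integral_logdiv_of_lt hs.1 (le_add_of_nonneg_left (Nat.cast_nonneg N))]
    have := partial_P_nonpos hs.1 (Y := (N:ℝ)+1) (le_add_of_nonneg_left (Nat.cast_nonneg N))
    linarith

lemma tsum_identity {s : ℝ} (hs : s ∈ Set.Ioc 1 2) :
    ∑' n : ℕ, zterm (n+1) s
      = (∑' n : ℕ, Real.log (n+1) / ((n:ℝ)+1) ^ s) - 1/(s-1)^2 := by
  have hA : Tendsto (fun N => ∑ k ∈ Finset.range N, zterm (k+1) s) atTop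
      (𝓝 (∑' n : ℕ, zterm (n+1) s)) :=
    (summable_zterm ⟨hs.1.le, hs.2⟩).hasSum.tendsto_sum_nat
  have hB : Tendsto (fun N => (∑ k ∈ Finset.range N, Real.log (k+1) / ((k:ℝ)+1) ^ s)
      - ∫ x in (1:ℝ)..((N:ℝ)+1), Real.log x / x ^ s) atTop
      (𝓝 ((∑' n : ℕ, Real.log (n+1) / ((n:ℝ)+1) ^ s) - 1/(s-1)^2)) :=
    ((summable_logdiv hs).hasSum.tendsto_sum_nat).sub (tendsto_integral_logdiv hs.1)
  refine tendsto_nhds_unique (hA.congr fun N => ?_) hB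
  exact sum_zterm_eq N s

end ZetaExp

namespace ZetaExp

/-- the first Stieltjes constant -/
def gammaOne : ℝ := ∑' n : ℕ, zterm (n+1) 1

lemma log_sq_diff_tendsto :
    Tendsto (fun N : ℕ => (Real.log ((N:ℝ)+1) ^ 2 - Real.log (N:ℝ) ^ 2) / 2) atTop (𝓝 0) := by
  have hN : Tendsto (fun N : ℕ => (N:ℝ)+1) atTop atTop :=
    tendsto_atTop_add_const_right _ 1 tendsto_natCast_atTop_atTop
  have h1 : Tendsto (fun x : ℝ => Real.log x / x) atTop (𝓝 0) := by
    simpa using (Real.isLittleO_log_id_atTop).tendsto_div_nhds_zero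
  have h2 : Tendsto (fun N : ℕ => Real.log ((N:ℝ)+1) / ((N:ℝ)+1)) atTop (𝓝 0) :=
    h1.comp hN
  have h3 : Tendsto (fun N : ℕ => 2 * (((N:ℝ)+1) / (N:ℝ))) atTop (𝓝 (2 * 1)) := by
    refine Tendsto.const_mul 2 ?_
    have h4 : Tendsto (fun N : ℕ => 1 + 1/(N:ℝ)) atTop (𝓝 (1 + 0)) :=
      tendsto_const_nhds.add tendsto_one_div_atTop_nhds_zero_nat
    rw [add_zero] at h4
    refine h4.congr' ?_
    filter_upwards [eventually_ge_atTop 1] with N hN1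
    have : (N:ℝ) ≠ 0 := by positivity
    field_simp
  have hg : Tendsto (fun N : ℕ => Real.log ((N:ℝ)+1) / ((N:ℝ)+1) * (2 * (((N:ℝ)+1) / (N:ℝ))))
      atTop (𝓝 (0 * (2*1))) := h2.mul h3
  rw [zero_mul] at hg
  refine squeeze_zero' ?_ ?_ hg
  · filter_upwards [eventually_ge_atTop 1] with N hN1
    have h1N : (1:ℝ) ≤ (N:ℝ) := by exact_mod_cast hN1
    have := Real.log_le_log (by linarith : (0:ℝ) < (N:ℝ)) (by linarith : (N:ℝ) ≤ (N:ℝ)+1)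
    have hl0 : 0 ≤ Real.log (N:ℝ) := Real.log_nonneg h1N
    nlinarith
  · filter_upwards [eventually_ge_atTop 1] with N hN1
    have h1N : (1:ℝ) ≤ (N:ℝ) := by exact_mod_cast hN1
    have hN0 : (0:ℝ) < (N:ℝ) := by linarith
    have hlog_diff : Real.log ((N:ℝ)+1) - Real.log (N:ℝ) ≤ 1/(N:ℝ) := by
      rw [← Real.log_div (by linarith) hN0.ne']
      have := Real.log_le_sub_one_of_pos (x := ((N:ℝ)+1)/(N:ℝ)) (by positivity)
      have heq : ((N:ℝ)+1)/(N:ℝ) - 1 = 1/(N:ℝ)  := by field_simp; ring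
      linarith
    have hmono : Real.log (N:ℝ) ≤ Real.log ((N:ℝ)+1) :=
      Real.log_le_log hN0 (by linarith)
    have hl0 : 0 ≤ Real.log (N:ℝ) := Real.log_nonneg h1N
    have hl1 : 0 ≤ Real.log ((N:ℝ)+1) := by linarith
    have key : Real.log ((N:ℝ)+1)^2 - Real.log (N:ℝ)^2
        ≤ 2 * Real.log ((N:ℝ)+1) * (1/(N:ℝ)) := by
      nlinarith
    have hrhs : Real.log ((N:ℝ)+1)/((N:ℝ)+1) * (2*(((N:ℝ)+1)/(N:ℝ)))
        = 2 * Real.log ((N:ℝ)+1) * (1/(N:ℝ)) := by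
      field_simp
    rw [hrhs]
    nlinarith [mul_nonneg hl1 (le_of_lt (one_div_pos.2 hN0))]

lemma tendsto_gammaOne_seq :
    Tendsto (fun N : ℕ => (∑ n ∈ Finset.Icc 1 N, Real.log n / n) - (Real.log N) ^ 2 / 2)
      atTop (𝓝 gammaOne) := by
  have hzsum : Tendsto (fun N => ∑ k ∈ Finset.range N, zterm (k+1) 1) atTop (𝓝 gammaOne) :=
    (summable_zterm (by constructor <;> norm_num)).hasSum.tendsto_sum_nat
  have key : ∀ N : ℕ, (∑ n ∈ Finset.Icc 1 N, Real.log n / n) - (Real.log N) ^ 2 / 2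
      = (∑ k ∈ Finset.range N, zterm (k+1) 1)
        + (Real.log ((N:ℝ)+1) ^ 2 - Real.log (N:ℝ) ^ 2) / 2 := by
    intro N
    have h1 : ∑ n ∈ Finset.Icc 1 N, Real.log n / (n:ℝ)
        = ∑ k ∈ Finset.range N, Real.log (k+1) / ((k:ℝ)+1) ^ (1:ℝ) := by
      rw [← Finset.Ico_add_one_right_eq_Icc, Finset.sum_Ico_eq_sum_range]
      simp only [Nat.add_sub_cancel]
      refine Finset.sum_congr rfl fun k _ => ?_
      rw [Real.rpow_one]
      push_cast
      rw [add_comm 1 (k:ℝ)]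
    have h2 := sum_zterm_eq N 1
    rw [integral_logdiv_one (le_add_of_nonneg_left (Nat.cast_nonneg N))] at h2
    rw [h1, h2]
    ring
  refine Tendsto.congr (fun N => (key N).symm) ?_
  have := hzsum.add log_sq_diff_tendsto
  simpa using this

end ZetaExp

namespace ZetaExp

lemma tendsto_const_rpow_one {c : ℝ} (hc : 0 < c) :
    Tendsto (fun s : ℝ => c ^ s) (𝓝[>] 1) (𝓝 (c ^ (1:ℝ))) := by
  have he : (fun s : ℝ => c ^ s) = fun s => Real.exp (Real.log c * s) :=
    funext fun s => Real.rpow_def_of_pos hc s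
  rw [he]
  refine Tendsto.mono_left ?_ nhdsWithin_le_nhds
  have hcont : Continuous fun s : ℝ => Real.exp (Real.log c * s) := by continuity
  simpa [Real.rpow_def_of_pos hc] using hcont.tendsto 1

lemma zterm_tendsto (n : ℕ) (hn : 1 ≤ n) :
    Tendsto (fun s : ℝ => zterm n s) (𝓝[>] 1) (𝓝 (zterm n 1)) := by
  have hn0 : (0:ℝ) < (n:ℝ) := by exact_mod_cast hn
  have huIoc : Set.uIoc (n:ℝ) ((n:ℝ)+1) = Set.Ioc (n:ℝ) ((n:ℝ)+1) :=
    Set.uIoc_of_le (by linarith)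
  unfold zterm
  refine intervalIntegral.tendsto_integral_filter_of_dominated_convergence
    (bound := fun _ => zbound n) ?_ ?_ ?_ ?_
  · filter_upwards with s
    have hc : ContinuousOn (fun x : ℝ => Real.log n / (n:ℝ)^s - Real.log x / x^s)
        (Set.uIcc (n:ℝ) ((n:ℝ)+1)) :=
      continuousOn_const.sub (continuousOn_logdiv hn0 (by linarith))
    exact (hc.mono Set.uIoc_subset_uIcc).aestronglyMeasurable measurableSet_uIoc
  · filter_upwards [Ioc_mem_nhdsGT_of_mem (Set.left_mem_Ico.2 (by norm_num : (1:ℝ) < 2))] with s hs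
    refine MeasureTheory.ae_of_all _ fun x hx => ?_
    rw [huIoc] at hx
    rw [Real.norm_eq_abs]
    exact integrand_bound ⟨hs.1.le, hs.2⟩ hn ⟨hx.1.le, hx.2⟩
  · exact intervalIntegrable_const
  · refine MeasureTheory.ae_of_all _ fun x hx => ?_
    rw [huIoc] at hx
    have hx0 : (0:ℝ) < x := lt_trans hn0 hx.1
    refine Tendsto.sub ?_ ?_
    · exact tendsto_const_nhds.div (tendsto_const_rpow_one hn0)
        (Real.rpow_pos_of_pos hn0 _).ne'
    · exact tendsto_const_nhds.div (tendsto_const_rpow_one hx0)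
        (Real.rpow_pos_of_pos hx0 _).ne'

lemma tendsto_tsum_zterm :
    Tendsto (fun s : ℝ => ∑' n : ℕ, zterm (n+1) s) (𝓝[>] 1) (𝓝 gammaOne) := by
  refine tendsto_tsum_of_dominated_convergence summable_zbound
    (fun n => zterm_tendsto (n+1) (by omega)) ?_
  filter_upwards [Ioc_mem_nhdsGT_of_mem (Set.left_mem_Ico.2 (by norm_num : (1:ℝ) < 2))] with s hs k
  rw [Real.norm_eq_abs]
  exact zterm_bound ⟨hs.1.le, hs.2⟩ (by omega)

/-- The main real limit: `1/(s-1)^2 - ∑ log n / n^s → -γ₁` as `s → 1⁺`. -/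
lemma tendsto_logdiv_tsum :
    Tendsto (fun s : ℝ => 1/(s-1)^2 - ∑' n : ℕ, Real.log (n+1) / ((n:ℝ)+1) ^ s)
      (𝓝[>] 1) (𝓝 (-gammaOne)) := by
  have := tendsto_tsum_zterm.neg
  refine this.congr' ?_
  filter_upwards [Ioc_mem_nhdsGT_of_mem (Set.left_mem_Ico.2 (by norm_num : (1:ℝ) < 2))] with s hs
  rw [tsum_identity hs]
  ring

end ZetaExp

namespace ZetaExp

local notation "γ" => Real.eulerMascheroniConstant

/-- `ζ(1+s) - 1/s`, with the singularity at `0` removed. -/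
def hfun : ℂ → ℂ := Function.update (fun s : ℂ => riemannZeta (1+s) - 1/s) 0 (γ : ℂ)

lemma hfun_eq {s : ℂ} (hs : s ≠ 0) : hfun s = riemannZeta (1+s) - 1/s :=
  Function.update_of_ne hs _ _

lemma hfun_zero : hfun 0 = (γ : ℂ) := Function.update_self _ _ _

lemma tendsto_one_add : Tendsto (fun s : ℂ => 1 + s) (𝓝[≠] 0) (𝓝[≠] 1) := by
  refine tendsto_nhdsWithin_of_tendsto_nhds_of_eventually_within _ ?_ ?_
  · have : Continuous fun s : ℂ => 1 + s := continuous_const.add continuous_id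
    simpa using (this.tendsto 0).mono_left nhdsWithin_le_nhds
  · filter_upwards [self_mem_nhdsWithin] with s hs
    simpa using hs

lemma tendsto_hfun_raw :
    Tendsto (fun s : ℂ => riemannZeta (1+s) - 1/s) (𝓝[≠] 0) (𝓝 (γ : ℂ)) := by
  have := tendsto_riemannZeta_sub_one_div.comp tendsto_one_add
  refine this.congr fun s => ?_
  simp [Function.comp]

lemma continuousAt_hfun : ContinuousAt hfun 0 := by
  rw [ContinuousAt, hfun_zero, ← nhdsNE_sup_pure 0, tendsto_sup]
  constructor
  · refine tendsto_hfun_raw.congr' ?_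
    filter_upwards [self_mem_nhdsWithin] with s hs
    exact (hfun_eq hs).symm
  · simpa [hfun_zero] using tendsto_pure_nhds hfun 0

lemma differentiableAt_hfun_ne {z : ℂ} (hz : z ≠ 0) : DifferentiableAt ℂ hfun z ∧
    HasDerivAt hfun (deriv riemannZeta (1+z) + 1/z^2) z := by
  have hz1 : (1:ℂ) + z ≠ 1 := by simpa using hz
  have hd1 : HasDerivAt (fun s : ℂ => riemannZeta (1+s)) (deriv riemannZeta (1+z)) z := by
    have h0 := (differentiableAt_riemannZeta hz1).hasDerivAt
    have := HasDerivAt.comp z h0 ((hasDerivAt_id z).const_add 1)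
    simpa [Function.comp_def] using this
  have hd2 : HasDerivAt (fun s : ℂ => 1/s) (-(z^2)⁻¹) z := by
    simpa [one_div] using (hasDerivAt_inv hz)
  have hd := hd1.sub hd2
  have heq : hfun =ᶠ[𝓝 z] fun s => riemannZeta (1+s) - 1/s := by
    filter_upwards [eventually_ne_nhds hz] with t ht
    exact hfun_eq ht
  have hd' : HasDerivAt hfun (deriv riemannZeta (1+z) - -(z^2)⁻¹) z :=
    HasDerivAt.congr_of_eventuallyEq hd heq
  refine ⟨hd'.differentiableAt, ?_⟩
  convert hd' using 1
  rw [one_div]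
  ring

lemma analyticAt_hfun : AnalyticAt ℂ hfun 0 := by
  refine Complex.analyticAt_of_differentiable_on_punctured_nhds_of_continuousAt ?_
    continuousAt_hfun
  filter_upwards [self_mem_nhdsWithin] with z hz
  exact (differentiableAt_hfun_ne hz).1

lemma deriv_hfun_ne {z : ℂ} (hz : z ≠ 0) :
    deriv hfun z = deriv riemannZeta (1+z) + 1/z^2 :=
  (differentiableAt_hfun_ne hz).2.deriv

lemma analyticAt_deriv_hfun : AnalyticAt ℂ (deriv hfun) 0 := by
  have := analyticAt_hfun.eventually_analyticAt
  rw [eventually_nhds_iff] at this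
  obtain ⟨U, hU, hUo, hU0⟩ := this
  exact (AnalyticOnNhd.deriv fun z hz => hU z hz) 0 hU0

end ZetaExp

namespace ZetaExp

lemma deriv_zeta_eq {σ : ℝ} (hσ : 0 < σ) :
    deriv riemannZeta (1 + (σ:ℂ))
      = -((∑' n : ℕ, Real.log (n+1) / ((n:ℝ)+1) ^ (1+σ) : ℝ) : ℂ) := by
  have hre : 1 < ((1:ℂ) + (σ:ℂ)).re := by simp [hσ]
  have habs : LSeries.abscissaOfAbsConv 1 < ((1:ℂ)+(σ:ℂ)).re := by
    rw [LSeries.abscissaOfAbsConv_one]; exact_mod_cast hre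
  have h1 : deriv riemannZeta (1+(σ:ℂ)) = deriv (LSeries 1) (1+(σ:ℂ)) := by
    refine Filter.EventuallyEq.deriv_eq ?_
    have hopen : IsOpen {z : ℂ | 1 < z.re} := isOpen_lt continuous_const Complex.continuous_re
    filter_upwards [hopen.mem_nhds hre] with z hz
    exact (LSeries_one_eq_riemannZeta hz).symm
  rw [h1, LSeries_deriv habs]
  have hsum : LSeriesSummable (LSeries.logMul 1) (1+(σ:ℂ)) :=
    LSeriesSummable_logMul_of_lt_re habs
  have hterm : ∀ n : ℕ, LSeries.term (LSeries.logMul 1) (1+(σ:ℂ)) (n+1)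
      = ((Real.log (n+1) / ((n:ℝ)+1) ^ (1+σ) : ℝ) : ℂ) := by
    intro n
    rw [LSeries.term_of_ne_zero (Nat.succ_ne_zero n)]
    have hcpow : ((n+1 : ℕ) : ℂ) ^ ((1:ℂ)+(σ:ℂ))
        = ((((n:ℝ)+1) ^ (1+σ) : ℝ) : ℂ) := by
      rw [Complex.ofReal_cpow (by positivity)]
      push_cast
      norm_num
    have hlog : LSeries.logMul 1 (n+1) = ((Real.log ((n:ℝ)+1) : ℝ) : ℂ) := by
      simp only [LSeries.logMul, Pi.one_apply, mul_one]
      rw [Complex.ofReal_log (by positivity)]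
      push_cast
      norm_num
    rw [hlog, hcpow, ← Complex.ofReal_div]
  rw [LSeries, Summable.tsum_eq_zero_add hsum]
  rw [LSeries.term_zero, zero_add]
  rw [Complex.ofReal_tsum]
  exact congrArg _ (tsum_congr hterm)

lemma tendsto_one_add_real : Tendsto (fun σ : ℝ => 1+σ) (𝓝[>] (0:ℝ)) (𝓝[>] (1:ℝ)) := by
  refine tendsto_nhdsWithin_of_tendsto_nhds_of_eventually_within _ ?_ ?_
  · simpa [Pi.add_def] using ((continuous_const.add continuous_id).tendsto (0:ℝ)).mono_left nhdsWithin_le_nhds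
  · filter_upwards [self_mem_nhdsWithin] with x hx
    simpa using hx

lemma deriv_hfun_zero : deriv hfun 0 = ((-gammaOne : ℝ) : ℂ) := by
  have t1 : Tendsto (fun σ : ℝ => deriv hfun σ) (𝓝[>] (0:ℝ)) (𝓝 (deriv hfun 0)) := by
    have hc : ContinuousAt (deriv hfun) 0 := analyticAt_deriv_hfun.continuousAt
    have hcast : Tendsto (fun σ : ℝ => (σ:ℂ)) (𝓝[>] (0:ℝ)) (𝓝 (0:ℂ)) := by
      simpa using (Complex.continuous_ofReal.tendsto 0).mono_left nhdsWithin_le_nhds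
    exact hc.tendsto.comp hcast
  have hreal : Tendsto (fun σ : ℝ => 1/σ^2 - ∑' n : ℕ, Real.log (n+1) / ((n:ℝ)+1) ^ (1+σ))
      (𝓝[>] (0:ℝ)) (𝓝 (-gammaOne)) := by
    have := tendsto_logdiv_tsum.comp tendsto_one_add_real
    refine this.congr fun σ => ?_
    simp [Function.comp]
  have t2 : Tendsto (fun σ : ℝ => deriv hfun σ) (𝓝[>] (0:ℝ)) (𝓝 ((-gammaOne : ℝ) : ℂ)) := by
    have := (Complex.continuous_ofReal.tendsto _).comp hreal
    refine this.congr' ?_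
    filter_upwards [self_mem_nhdsWithin] with σ hσ
    have hσ0 : (0:ℝ) < σ := hσ
    have hzz : (σ:ℂ) ≠ 0 := by exact_mod_cast hσ0.ne'
    rw [Function.comp, deriv_hfun_ne hzz, deriv_zeta_eq hσ0]
    push_cast
    ring
  exact tendsto_nhds_unique t1 t2

end ZetaExp

namespace ZetaExp

local notation "γ" => Real.eulerMascheroniConstant

def phi : ℂ → ℂ := fun s => (hfun s + s * deriv hfun s) / (1 + s * hfun s)

lemma phi_zero : phi 0 = (γ:ℂ) := by simp [phi, hfun_zero]

lemma hasDerivAt_phi :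
    HasDerivAt phi (2 * deriv hfun 0 - (γ:ℂ)^2) 0 := by
  have h1 : HasDerivAt hfun (deriv hfun 0) 0 := analyticAt_hfun.differentiableAt.hasDerivAt
  have h2 : HasDerivAt (deriv hfun) (deriv (deriv hfun) 0) 0 :=
    analyticAt_deriv_hfun.differentiableAt.hasDerivAt
  have hnum : HasDerivAt (fun s : ℂ => hfun s + s * deriv hfun s)
      (deriv hfun 0 + (1 * deriv hfun 0 + 0 * deriv (deriv hfun) 0)) 0 :=
    h1.add ((hasDerivAt_id 0).mul h2)
  have hden : HasDerivAt (fun s : ℂ => 1 + s * hfun s)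
      (1 * hfun 0 + 0 * deriv hfun 0) 0 := ((hasDerivAt_id 0).mul h1).const_add 1
  have hval : (1:ℂ) + (0:ℂ) * hfun 0 ≠ 0 := by simp
  have := hnum.div hden hval
  refine this.congr_deriv ?_
  rw [hfun_zero]
  field_simp [phi]
  ring

lemma tendsto_slope_phi :
    Tendsto (fun s : ℂ => (phi s - (γ:ℂ)) / s) (𝓝[≠] 0)
      (𝓝 (2 * deriv hfun 0 - (γ:ℂ)^2)) := by
  have := hasDerivAt_iff_tendsto_slope.1 hasDerivAt_phi
  refine this.congr fun s => ?_
  rw [slope_def_field, phi_zero, sub_zero]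

theorem main_tendsto :
    Tendsto (fun s : ℂ =>
        (deriv riemannZeta (1 + s) / riemannZeta (1 + s) + 1 / s - (γ : ℂ)) / s)
      (𝓝[≠] (0:ℂ)) (𝓝 (-(γ : ℂ) ^ 2 - 2 * (gammaOne : ℂ))) := by
  have hlim := tendsto_slope_phi
  rw [deriv_hfun_zero] at hlim
  have hval : (2 * ((-gammaOne : ℝ):ℂ) - (γ:ℂ)^2) = -(γ:ℂ)^2 - 2*(gammaOne:ℂ) := by
    push_cast; ring
  rw [hval] at hlim
  refine hlim.congr' ?_
  have hne : ∀ᶠ s in 𝓝[≠] (0:ℂ), 1 + s * hfun s ≠ 0 := by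
    have hc : ContinuousAt (fun s : ℂ => 1 + s * hfun s) 0 :=
      continuousAt_const.add (continuousAt_id.mul analyticAt_hfun.continuousAt)
    have := hc.eventually_ne (by simp : (1:ℂ) + (0:ℂ) * hfun 0 ≠ 0)
    exact this.filter_mono nhdsWithin_le_nhds
  filter_upwards [self_mem_nhdsWithin, hne] with s hs hden
  have hs0 : s ≠ 0 := hs
  have hH : hfun s = riemannZeta (1+s) - 1/s := hfun_eq hs0
  have hD : deriv hfun s = deriv riemannZeta (1+s) + 1/s^2 := deriv_hfun_ne hs0
  have hzeta : riemannZeta (1+s) = (1 + s * hfun s)/s := by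
    rw [hH]; field_simp; ring
  have hzne : riemannZeta (1+s) ≠ 0 := by
    rw [hzeta]; exact div_ne_zero hden hs0
  have hden' : (1:ℂ) + s * (riemannZeta (1+s) - 1/s) ≠ 0 := by rwa [hH] at hden
  have key : phi s = deriv riemannZeta (1+s)/riemannZeta (1+s) + 1/s := by
    rw [phi, hD, hH]
    field_simp
    ring
  rw [key]

end ZetaExp


end

end ZetaExpansionAux

theorem zeta_logDeriv_second_order_expansion :
    ∃ γ₁ : ℝ,
      Tendsto (fun N : ℕ => (∑ n ∈ Finset.Icc 1 N, Real.log n / n) - (Real.log N) ^ 2 / 2)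
        atTop (𝓝 γ₁) ∧
      Tendsto
        (fun s : ℂ =>
          (deriv riemannZeta (1 + s) / riemannZeta (1 + s) + 1 / s -
            (Real.eulerMascheroniConstant : ℂ)) / s)
        (𝓝[≠] (0 : ℂ))
        (𝓝 (-(Real.eulerMascheroniConstant : ℂ) ^ 2 - 2 * (γ₁ : ℂ))) := by
  exact ⟨ZetaExp.gammaOne, ZetaExp.tendsto_gammaOne_seq, ZetaExp.main_tendsto⟩
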